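/- Let M be the symmetric 4×4 matrix over ℚ with rows (4, −1, 0, 0), (−1, 2, 1, −1), (0, 1, 0, 1), (0, −1, 1, 0). Then the quadratic form x ↦ xᵀMx on ℚ⁴ is equivalent to the diagonal quadratic form ⟨4, 7/4, −4/7, 15/4⟩. -/

import Mathlib

open QuadraticMap

/-- The quadratic form of the symmetrized Seifert matrix of the mirror of `7₄` is
equivalent to the diagonal form `⟨4, 7/4, -4/7, 15/4⟩`. -/
theorem seifert_form_seven_four :
    QuadraticMap.Equivalent
      (Matrix.toQuadraticMap'
        (!![(4 : ℚ), -1, 0, 0; -1, 2, 1, -1; 0, 1, 0, 1; 0, -1, 1, 0]))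
      (weightedSumSquares ℚ ![(4 : ℚ), 7/4, -4/7, 15/4]) := by
  let P : Matrix (Fin 4) (Fin 4) ℚ :=
    !![1, 1/4, -1/7, -1/4; 0, 1, -4/7, -1; 0, 0, 1, 11/4; 0, 0, 0, 1]
  let Pi : Matrix (Fin 4) (Fin 4) ℚ :=
    !![1, -1/4, 0, 0; 0, 1, 4/7, -4/7; 0, 0, 1, -11/4; 0, 0, 0, 1]
  refine ⟨⟨LinearEquiv.ofLinear (Matrix.toLin' Pi) (Matrix.toLin' P) ?_ ?_, ?_⟩⟩
  · apply LinearMap.ext; intro x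
    simp [Matrix.toLin'_apply, Matrix.mulVec, dotProduct, Fin.sum_univ_succ, P, Pi]
    funext i; fin_cases i <;> simp <;> first | rfl | ring
  · apply LinearMap.ext; intro x
    simp [Matrix.toLin'_apply, Matrix.mulVec, dotProduct, Fin.sum_univ_succ, P, Pi]
    funext i; fin_cases i <;> simp <;> first | rfl | ring
  · intro x
    simp [Matrix.toQuadraticMap', Matrix.toQuadraticForm', LinearMap.BilinMap.toQuadraticMap_apply,
      Matrix.toLinearMap₂'_apply, weightedSumSquares_apply, Matrix.toLin'_apply,
      Matrix.mulVec, dotProduct, Fin.sum_univ_succ, P, Pi]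
    ring
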